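/- Let p > 1, q > 1 with 1/p + 1/q = 1, and let n be a positive integer. If a_1,…,a_n ≥ 0 and b_1,…,b_n ≥ 0 satisfy Σ_{k=1}^n a_k = 1 and Σ_{k=1}^n b_k = 1, then 1 − Σ_{k=1}^n a_k^{1/p} b_k^{1/q} ≥ (1/(2pq)) (Σ_{k=1}^n |a_k − b_k|)^2. -/

import Mathlib

noncomputable def phiAux (θ : ℝ) : ℝ → ℝ := fun x =>
  (θ*(1+θ)*x^2 + 2*(1+θ)*(2-θ)*x + (2-θ)*(1-θ)) * x ^ (-θ) - (2*(2-θ)*x + 2*(1+θ))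

noncomputable def phiAux1 (θ : ℝ) : ℝ → ℝ := fun x =>
  (2*(θ*(1+θ))*x + 2*(1+θ)*(2-θ)) * x ^ (-θ)
    + (θ*(1+θ)*x^2 + 2*(1+θ)*(2-θ)*x + (2-θ)*(1-θ)) * (-θ * x ^ (-θ-1)) - 2*(2-θ)

lemma hasDeriv_phiAux (θ : ℝ) {x : ℝ} (hx : 0 < x) :
    HasDerivAt (phiAux θ) (phiAux1 θ x) x := by
  unfold phiAux phiAux1
  have hr1 : HasDerivAt (fun y : ℝ => y ^ (-θ)) (-θ * x ^ (-θ-1)) x :=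
    Real.hasDerivAt_rpow_const (Or.inl hx.ne')
  have hsq : HasDerivAt (fun y : ℝ => y^2) (2*x) x := by
    simpa using hasDerivAt_pow 2 x
  have hlin2 : HasDerivAt (fun y : ℝ => 2*(1+θ)*(2-θ)*y) (2*(1+θ)*(2-θ)) x := by
    simpa using (hasDerivAt_id x).const_mul (2*(1+θ)*(2-θ))
  have hpoly : HasDerivAt (fun y : ℝ => θ*(1+θ)*y^2 + 2*(1+θ)*(2-θ)*y + (2-θ)*(1-θ))
      (2*(θ*(1+θ))*x + 2*(1+θ)*(2-θ)) x := by
    have h := ((hsq.const_mul (θ*(1+θ))).add hlin2).add_const ((2-θ)*(1-θ))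
    exact h.congr_deriv (by ring)
  have hlin3 : HasDerivAt (fun y : ℝ => 2*(2-θ)*y + 2*(1+θ)) (2*(2-θ)) x := by
    simpa using ((hasDerivAt_id x).const_mul (2*(2-θ))).add_const (2*(1+θ))
  have h := (hpoly.mul hr1).sub hlin3
  exact h.congr_deriv (by ring)

lemma hasDeriv_phiAux1 (θ : ℝ) {x : ℝ} (hx : 0 < x) :
    HasDerivAt (phiAux1 θ) (θ*(1-θ)*(1+θ)*(2-θ)*(x-1)^2 * x ^ (-θ-2)) x := by
  unfold phiAux1
  have hr1 : HasDerivAt (fun y : ℝ => y ^ (-θ)) (-θ * x ^ (-θ-1)) x :=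
    Real.hasDerivAt_rpow_const (Or.inl hx.ne')
  have hr2 : HasDerivAt (fun y : ℝ => y ^ (-θ-1)) ((-θ-1) * x ^ (-θ-2)) x := by
    have h := Real.hasDerivAt_rpow_const (x := x) (p := -θ-1) (Or.inl hx.ne')
    rw [show (-θ-1-1 : ℝ) = -θ-2 from by ring] at h
    exact h
  have hsq : HasDerivAt (fun y : ℝ => y^2) (2*x) x := by
    simpa using hasDerivAt_pow 2 x
  have hlin2 : HasDerivAt (fun y : ℝ => 2*(1+θ)*(2-θ)*y) (2*(1+θ)*(2-θ)) x := by
    simpa using (hasDerivAt_id x).const_mul (2*(1+θ)*(2-θ))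
  have hpoly : HasDerivAt (fun y : ℝ => θ*(1+θ)*y^2 + 2*(1+θ)*(2-θ)*y + (2-θ)*(1-θ))
      (2*(θ*(1+θ))*x + 2*(1+θ)*(2-θ)) x := by
    have h := ((hsq.const_mul (θ*(1+θ))).add hlin2).add_const ((2-θ)*(1-θ))
    exact h.congr_deriv (by ring)
  have hlinA : HasDerivAt (fun y : ℝ => 2*(θ*(1+θ))*y + 2*(1+θ)*(2-θ)) (2*(θ*(1+θ))) x := by
    simpa using ((hasDerivAt_id x).const_mul (2*(θ*(1+θ)))).add_const (2*(1+θ)*(2-θ))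
  have hA := hlinA.mul hr1
  have hB := hpoly.mul (hr2.const_mul (-θ))
  have h := (hA.add hB).sub_const (2*(2-θ))
  refine h.congr_deriv ?_
  have e1 : x ^ (-θ) = x ^ (-θ-2) * x^2 := by
    rw [show x^2 = x ^ ((2:ℕ):ℝ) from (Real.rpow_natCast x 2).symm, ← Real.rpow_add hx]
    congr 1
    push_cast
    ring
  have e2 : x ^ (-θ-1) = x ^ (-θ-2) * x := by
    rw [show x ^ (-θ-2) * x = x ^ (-θ-2) * x ^ (1:ℝ) from by rw [Real.rpow_one],
      ← Real.rpow_add hx]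
    congr 1
    ring
  rw [e1, e2]
  ring

lemma phiAux_nonneg (θ : ℝ) (h0 : 0 < θ) (h1 : θ < 1) {t : ℝ} (ht : 0 < t) :
    0 ≤ phiAux θ t := by
  have hφ₁1 : phiAux1 θ 1 = 0 := by
    unfold phiAux1
    simp only [Real.one_rpow, one_pow, mul_one]
    ring
  have hφ1 : phiAux θ 1 = 0 := by
    unfold phiAux
    simp only [Real.one_rpow, one_pow, mul_one]
    ring
  have hmono₁ : MonotoneOn (phiAux1 θ) (Set.Ioi (0:ℝ)) := by
    apply monotoneOn_of_deriv_nonneg (convex_Ioi 0)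
    · intro x hx
      exact (hasDeriv_phiAux1 θ hx).continuousAt.continuousWithinAt
    · rw [interior_Ioi]
      intro x hx
      exact (hasDeriv_phiAux1 θ hx).differentiableAt.differentiableWithinAt
    · rw [interior_Ioi]
      intro x hx
      rw [(hasDeriv_phiAux1 θ hx).deriv]
      have hcoef : 0 ≤ θ*(1-θ)*(1+θ)*(2-θ) := by
        have a1 : (0:ℝ) < 1-θ := by linarith
        have a2 : (0:ℝ) < 1+θ := by linarith
        have a3 : (0:ℝ) < 2-θ := by linarith
        exact le_of_lt (mul_pos (mul_pos (mul_pos h0 a1) a2) a3)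
      exact mul_nonneg (mul_nonneg hcoef (sq_nonneg _)) (Real.rpow_nonneg hx.le _)
  have hsign : ∀ x : ℝ, 0 < x → x ≤ 1 → phiAux1 θ x ≤ 0 := by
    intro x hx hx1
    have h := hmono₁ (Set.mem_Ioi.2 hx) (Set.mem_Ioi.2 one_pos) hx1
    rwa [hφ₁1] at h
  have hsign' : ∀ x : ℝ, 1 ≤ x → 0 ≤ phiAux1 θ x := by
    intro x hx
    have h := hmono₁ (Set.mem_Ioi.2 one_pos) (Set.mem_Ioi.2 (lt_of_lt_of_le one_pos hx)) hx
    rwa [hφ₁1] at h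
  have hmonoIci : MonotoneOn (phiAux θ) (Set.Ici (1:ℝ)) := by
    apply monotoneOn_of_deriv_nonneg (convex_Ici 1)
    · intro x hx
      exact (hasDeriv_phiAux θ (lt_of_lt_of_le one_pos hx)).continuousAt.continuousWithinAt
    · rw [interior_Ici]
      intro x hx
      exact (hasDeriv_phiAux θ (lt_trans one_pos hx)).differentiableAt.differentiableWithinAt
    · rw [interior_Ici]
      intro x hx
      rw [(hasDeriv_phiAux θ (lt_trans one_pos hx)).deriv]
      exact hsign' x (le_of_lt hx)
  have hantIoc : AntitoneOn (phiAux θ) (Set.Ioc (0:ℝ) 1) := by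
    apply antitoneOn_of_deriv_nonpos (convex_Ioc 0 1)
    · intro x hx
      exact (hasDeriv_phiAux θ hx.1).continuousAt.continuousWithinAt
    · rw [interior_Ioc]
      intro x hx
      exact (hasDeriv_phiAux θ hx.1).differentiableAt.differentiableWithinAt
    · rw [interior_Ioc]
      intro x hx
      rw [(hasDeriv_phiAux θ hx.1).deriv]
      exact hsign x hx.1 (le_of_lt hx.2)
  rcases le_total t 1 with h | h
  · have hle := hantIoc (Set.mem_Ioc.2 ⟨ht, h⟩) (Set.mem_Ioc.2 ⟨one_pos, le_refl 1⟩) h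
    rwa [hφ1] at hle
  · have hle := hmonoIci (Set.mem_Ici.2 (le_refl 1)) (Set.mem_Ici.2 h) h
    rwa [hφ1] at hle

lemma key1 (θ : ℝ) (h0 : 0 < θ) (h1 : θ < 1) {t : ℝ} (ht : 0 ≤ t) :
    3*θ*(1-θ)*(t-1)^2 ≤ (θ*t+1-θ-t^θ) * (2*(2-θ)*t + 2*(1+θ)) := by
  rcases ht.eq_or_lt with h | h
  · rw [← h, Real.zero_rpow h0.ne']
    nlinarith [mul_nonneg (by linarith : (0:ℝ) ≤ 1-θ) (by linarith : (0:ℝ) ≤ 2-θ)]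
  · have hφ := phiAux_nonneg θ h0 h1 h
    unfold phiAux at hφ
    have hX : 0 < t ^ θ := Real.rpow_pos_of_pos h θ
    rw [Real.rpow_neg h.le] at hφ
    have h6 : (2*(2-θ)*t + 2*(1+θ)) ≤
        (θ*(1+θ)*t^2 + 2*(1+θ)*(2-θ)*t + (2-θ)*(1-θ)) * (t^θ)⁻¹ := by linarith
    have h5 : (2*(2-θ)*t + 2*(1+θ)) * t^θ ≤
        θ*(1+θ)*t^2 + 2*(1+θ)*(2-θ)*t + (2-θ)*(1-θ) := by
      calc (2*(2-θ)*t + 2*(1+θ)) * t^θ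
          ≤ ((θ*(1+θ)*t^2 + 2*(1+θ)*(2-θ)*t + (2-θ)*(1-θ)) * (t^θ)⁻¹) * t^θ :=
            mul_le_mul_of_nonneg_right h6 hX.le
        _ = θ*(1+θ)*t^2 + 2*(1+θ)*(2-θ)*t + (2-θ)*(1-θ) := by
            rw [mul_assoc, inv_mul_cancel₀ hX.ne', mul_one]
    nlinarith [h5]

lemma key2 (θ : ℝ) (h0 : 0 < θ) (h1 : θ < 1) (a b : ℝ) (ha : 0 ≤ a) (hb : 0 ≤ b) :
    3*θ*(1-θ)*(a-b)^2 ≤ (θ*a + (1-θ)*b - a^θ * b^(1-θ)) * (2*(2-θ)*a + 2*(1+θ)*b) := by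
  rcases hb.eq_or_lt with h | h
  · rw [← h, Real.zero_rpow (by intro hc; linarith : (1:ℝ)-θ ≠ 0)]
    have hney : (0:ℝ) ≤ θ*(1+θ) := by nlinarith
    nlinarith [mul_nonneg hney (sq_nonneg a)]
  · have hb' : b ≠ 0 := h.ne'
    have e0 : (a/b)^θ * b = a^θ * b^(1-θ) := by
      rw [Real.div_rpow ha h.le, Real.rpow_sub h, Real.rpow_one]
      field_simp [(Real.rpow_pos_of_pos h θ).ne']
    have H := mul_le_mul_of_nonneg_right (key1 θ h0 h1 (div_nonneg ha h.le)) (sq_nonneg b)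
    have eL : 3*θ*(1-θ)*(a/b-1)^2 * b^2 = 3*θ*(1-θ)*(a-b)^2 := by
      field_simp <;> ring
    have eR : (θ*(a/b)+1-θ-(a/b)^θ) * (2*(2-θ)*(a/b) + 2*(1+θ)) * b^2
        = (θ*a + (1-θ)*b - a^θ * b^(1-θ)) * (2*(2-θ)*a + 2*(1+θ)*b) := by
      rw [← e0]
      field_simp <;> ring
    rw [eL, eR] at H
    exact H

theorem holder_L1_stability_discrete
    (p q : ℝ) (hp : 1 < p) (hq : 1 < q) (hpq : 1/p + 1/q = 1)
    (n : ℕ) (hn : 0 < n) (a b : Fin n → ℝ)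
    (ha : ∀ k, 0 ≤ a k) (hb : ∀ k, 0 ≤ b k)
    (hsa : ∑ k, a k = 1) (hsb : ∑ k, b k = 1) :
    1 - ∑ k, (a k) ^ (1/p) * (b k) ^ (1/q)
      ≥ (1/(2*p*q)) * (∑ k, |a k - b k|)^2 := by
  have hp0 : 0 < p := lt_trans one_pos hp
  have hq0 : 0 < q := lt_trans one_pos hq
  obtain ⟨θ, hθp, hθq⟩ : ∃ θ:ℝ, 1/p = θ ∧ 1/q = 1-θ := ⟨1/p, rfl, by linarith⟩
  have h0 : 0 < θ := by rw [← hθp]; positivity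
  have h1 : θ < 1 := by
    rw [← hθp, div_lt_one hp0]; exact hp
  rw [ge_iff_le]
  simp only [hθp, hθq]
  set V : ℝ := ∑ k, |a k - b k| with hVdef
  have hV0 : 0 ≤ V := Finset.sum_nonneg fun k _ => abs_nonneg _
  have hu : ∀ k, 0 ≤ θ * a k + (1-θ) * b k - (a k)^θ * (b k)^(1-θ) := by
    intro k
    have hgm := Real.geom_mean_le_arith_mean2_weighted h0.le (by linarith : (0:ℝ) ≤ 1-θ)
      (ha k) (hb k) (by ring)
    linarith
  have hw : ∀ k, 0 ≤ 2*(2-θ) * a k + 2*(1+θ) * b k := by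
    intro k
    have h2 := ha k
    have h3 := hb k
    nlinarith
  have hkey : ∀ k, 3*θ*(1-θ) * (a k - b k)^2
      ≤ (θ * a k + (1-θ) * b k - (a k)^θ * (b k)^(1-θ)) * (2*(2-θ) * a k + 2*(1+θ) * b k) := by
    intro k
    exact key2 θ h0 h1 (a k) (b k) (ha k) (hb k)
  have hc : (0:ℝ) < 3*θ*(1-θ) := by nlinarith
  have hsumu : ∑ k, (θ * a k + (1-θ) * b k - (a k)^θ * (b k)^(1-θ))
      = 1 - ∑ k, (a k)^θ * (b k)^(1-θ) := by
    rw [Finset.sum_sub_distrib, Finset.sum_add_distrib, ← Finset.mul_sum, ← Finset.mul_sum,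
      hsa, hsb]
    ring
  have hsumw : ∑ k, (2*(2-θ) * a k + 2*(1+θ) * b k) = 6 := by
    rw [Finset.sum_add_distrib, ← Finset.mul_sum, ← Finset.mul_sum, hsa, hsb]
    ring
  have hstep : Real.sqrt (3*θ*(1-θ)) * V
      ≤ ∑ k, Real.sqrt ((θ * a k + (1-θ) * b k - (a k)^θ * (b k)^(1-θ))
          * (2*(2-θ) * a k + 2*(1+θ) * b k)) := by
    rw [hVdef, Finset.mul_sum]
    apply Finset.sum_le_sum
    intro i _
    have e : Real.sqrt (3*θ*(1-θ)) * |a i - b i| = Real.sqrt (3*θ*(1-θ) * (a i - b i)^2) := by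
      rw [Real.sqrt_mul hc.le, Real.sqrt_sq_eq_abs]
    rw [e]
    exact Real.sqrt_le_sqrt (hkey i)
  have hCS : (∑ k, Real.sqrt ((θ * a k + (1-θ) * b k - (a k)^θ * (b k)^(1-θ))
        * (2*(2-θ) * a k + 2*(1+θ) * b k)))^2
      ≤ (∑ k, (θ * a k + (1-θ) * b k - (a k)^θ * (b k)^(1-θ)))
        * (∑ k, (2*(2-θ) * a k + 2*(1+θ) * b k)) :=
    Finset.sum_sq_le_sum_mul_sum_of_sq_eq_mul Finset.univ (fun i _ => hu i) (fun i _ => hw i)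
      (fun i _ => Real.sq_sqrt (mul_nonneg (hu i) (hw i)))
  have h7 : (Real.sqrt (3*θ*(1-θ)) * V)^2
      ≤ (∑ k, Real.sqrt ((θ * a k + (1-θ) * b k - (a k)^θ * (b k)^(1-θ))
          * (2*(2-θ) * a k + 2*(1+θ) * b k)))^2 :=
    pow_le_pow_left₀ (by positivity) hstep 2
  rw [mul_pow, Real.sq_sqrt hc.le] at h7
  rw [hsumw, hsumu] at hCS
  have hfinal : 3*θ*(1-θ) * V^2 ≤ (1 - ∑ k, (a k)^θ * (b k)^(1-θ)) * 6 := le_trans h7 hCS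
  have hθval : 3*θ*(1-θ) = 3/(p*q) := by
    rw [← hθp, show (1:ℝ) - 1/p = 1/q from by linarith]
    field_simp
  have h8 : 1/(2*p*q) * V^2 = (3/(p*q) * V^2)/6 := by
    field_simp <;> ring
  rw [h8, ← hθval]
  linarith
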